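/- For the monotone junction scheme cell j=0 (update p^{n+1}_{1/2} = F₀-coupled Godunov step), for any (k_L,k_R), the following discrete entropy inequality with remainder holds: |p^{n+1}_{1/2} − k_R| ≤ |p^n_{1/2} − k_R| + (Δt/Δx)(Φ_0^n − Φ_1^n + R_R), where Φ_0^n = F₀(p^n_{−1/2}∨k_L, p^n_{1/2}∨k_R) − F₀(p^n_{−1/2}∧k_L, p^n_{1/2}∧k_R), Φ_1^n = g^{H_R}(p^n_{1/2}∨k_R, p^n_{3/2}∨k_R) − g^{H_R}(p^n_{1/2}∧k_R, p^n_{3/2}∧k_R), and R_R = |H_R(k_R) − F₀(k_L,k_R)|. -/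
import Mathlib


open Set

/-- Discrete entropy inequality with remainder for the junction cell `j = 0`.
Here `pm`, `p`, `q` stand for `p^n_{-1/2}`, `p^n_{1/2}`, `p^n_{3/2}`. -/
theorem junction_cell_entropy_inequality
    (Δt Δx L kL kR : ℝ) (hΔt : 0 < Δt) (hΔx : 0 < Δx) (hL : 0 ≤ L)
    (hCFL : 2 * L ≤ Δx / Δt)
    (HR : ℝ → ℝ) (gR F0 : ℝ → ℝ → ℝ)
    (hgRcons : ∀ p, gR p p = HR p)
    (hgR1 : ∀ b, Monotone fun a => gR a b) (hgR2 : ∀ a, Antitone fun b => gR a b)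
    (hF01 : ∀ b, Monotone fun a => F0 a b) (hF02 : ∀ a, Antitone fun b => F0 a b)
    (hgRLip1 : ∀ a a' b, |gR a b - gR a' b| ≤ L * |a - a'|)
    (hgRLip2 : ∀ a b b', |gR a b - gR a b'| ≤ L * |b - b'|)
    (hF0Lip1 : ∀ a a' b, |F0 a b - F0 a' b| ≤ L * |a - a'|)
    (hF0Lip2 : ∀ a b b', |F0 a b - F0 a b'| ≤ L * |b - b'|)
    (S : ℝ → ℝ → ℝ → ℝ)
    (hS : ∀ u v w, S u v w = v - (Δt / Δx) * (gR v w - F0 u v))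
    (hSmono1 : ∀ v w, Monotone fun u => S u v w)
    (hSmono2 : ∀ u w, Monotone fun v => S u v w)
    (hSmono3 : ∀ u v, Monotone fun w => S u v w)
    (pm p q : ℝ) :
    |S pm p q - kR| ≤ |p - kR| + (Δt / Δx) *
      ((F0 (max pm kL) (max p kR) - F0 (min pm kL) (min p kR))
        - (gR (max p kR) (max q kR) - gR (min p kR) (min q kR))
        + |HR kR - F0 kL kR|) := by
  have hlam : 0 ≤ Δt / Δx := le_of_lt (div_pos hΔt hΔx)
  -- monotonicity in all three arguments combined
  have hmono : ∀ u v w u' v' w', u ≤ u' → v ≤ v' → w ≤ w' →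
      S u v w ≤ S u' v' w' := by
    intro u v w u' v' w' hu hv hw
    calc S u v w ≤ S u' v w := hSmono1 v w hu
      _ ≤ S u' v' w := hSmono2 u' w hv
      _ ≤ S u' v' w' := hSmono3 u' v' hw
  set A := S (max pm kL) (max p kR) (max q kR) with hA
  set B := S (min pm kL) (min p kR) (min q kR) with hB
  have h1 : S pm p q ≤ A := hmono _ _ _ _ _ _ (le_max_left _ _) (le_max_left _ _) (le_max_left _ _)
  have h2 : S kL kR kR ≤ A := hmono _ _ _ _ _ _ (le_max_right _ _) (le_max_right _ _) (le_max_right _ _)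
  have h3 : B ≤ S pm p q := hmono _ _ _ _ _ _ (min_le_left _ _) (min_le_left _ _) (min_le_left _ _)
  have h4 : B ≤ S kL kR kR := hmono _ _ _ _ _ _ (min_le_right _ _) (min_le_right _ _) (min_le_right _ _)
  have habs : |S pm p q - S kL kR kR| ≤ A - B := by
    rw [abs_sub_le_iff]
    constructor <;> linarith
  have hAB : A - B = |p - kR| + (Δt / Δx) *
      ((F0 (max pm kL) (max p kR) - F0 (min pm kL) (min p kR))
        - (gR (max p kR) (max q kR) - gR (min p kR) (min q kR))) := by
    rw [hA, hB, hS, hS, ← max_sub_min_eq_abs, max_comm kR p, min_comm kR p]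
    ring
  have hk : |S kL kR kR - kR| = (Δt / Δx) * |HR kR - F0 kL kR| := by
    rw [hS, hgRcons]
    rw [show kR - Δt / Δx * (HR kR - F0 kL kR) - kR = -(Δt / Δx * (HR kR - F0 kL kR)) by ring]
    rw [abs_neg, abs_mul, abs_of_nonneg hlam]
  calc |S pm p q - kR| ≤ |S pm p q - S kL kR kR| + |S kL kR kR - kR| := abs_sub_le _ _ _
    _ ≤ (A - B) + (Δt / Δx) * |HR kR - F0 kL kR| := by rw [hk]; linarith
    _ = _ := by rw [hAB]; ring
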